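/- arXiv:1306.4375 — 2 statements merged into one kernel-verified Lean document; each statement's English description precedes it below -/
import Mathlib

section
/- The function f_gar(κ) is strictly increasing and positive on ℝ, with f_gar(κ) → 0 as κ → -∞ and f_gar(κ) → ∞ as κ → ∞. -/
open Real MeasureTheory Filter Set

noncomputable def erfc (x : ℝ) : ℝ := (2 / Real.sqrt π) * ∫ t in Set.Ioi x, Real.exp (-t^2)

noncomputable def fgar (κ : ℝ) : ℝ :=
  κ * Real.exp (-κ^2 / 2) / Real.sqrt (2 * π) + (κ^2 + 1) * erfc (-κ / Real.sqrt 2) / 2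

noncomputable def gI (x : ℝ) : ℝ := ∫ t in Set.Ioi x, Real.exp (-t^2)

lemma expsq_integrable : Integrable (fun t : ℝ => Real.exp (-t^2)) := by
  simpa using integrable_exp_neg_mul_sq (one_pos)

lemma expsq_cont : Continuous (fun t : ℝ => Real.exp (-t^2)) := by
  continuity

lemma gI_eq (x : ℝ) : gI x = gI 0 - ∫ t in (0:ℝ)..x, Real.exp (-t^2) := by
  have h1 := intervalIntegral.integral_Iic_add_Ioi (b := x)
    expsq_integrable.integrableOn expsq_integrable.integrableOn
  have h2 := intervalIntegral.integral_Iic_add_Ioi (b := (0:ℝ))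
    expsq_integrable.integrableOn expsq_integrable.integrableOn
  have h3 := intervalIntegral.integral_Iic_sub_Iic (a := (0:ℝ)) (b := x)
    expsq_integrable.integrableOn expsq_integrable.integrableOn
  unfold gI
  linarith [h1, h2, h3]

lemma gI_hasDerivAt (x : ℝ) : HasDerivAt gI (-Real.exp (-x^2)) x := by
  have h : HasDerivAt (fun u => ∫ t in (0:ℝ)..u, Real.exp (-t^2)) (Real.exp (-x^2)) x :=
    intervalIntegral.integral_hasDerivAt_right
      (expsq_integrable.intervalIntegrable)
      (expsq_cont.stronglyMeasurableAtFilter _ _)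
      expsq_cont.continuousAt
  have h2 : HasDerivAt (fun u => gI 0 - ∫ t in (0:ℝ)..u, Real.exp (-t^2)) (-Real.exp (-x^2)) x :=
    (h.const_sub _)
  exact h2.congr_of_eventuallyEq (Filter.Eventually.of_forall fun y => gI_eq y)

lemma gI_pos (x : ℝ) : 0 < gI x := by
  rw [gI, MeasureTheory.setIntegral_pos_iff_support_of_nonneg_ae
    (Filter.Eventually.of_forall fun t => (Real.exp_pos _).le) expsq_integrable.integrableOn]
  have hs : Function.support (fun t : ℝ => Real.exp (-t^2)) = Set.univ := by
    ext t; simp [Real.exp_ne_zero]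
  rw [hs, Set.univ_inter]
  simp [Real.volume_Ioi]

lemma gI_zero : gI 0 = Real.sqrt π / 2 := by
  have := integral_gaussian_Ioi 1
  simpa [gI] using this

lemma gI_anti {x y : ℝ} (h : x ≤ y) : gI y ≤ gI x := by
  apply MeasureTheory.setIntegral_mono_set expsq_integrable.integrableOn
    (Filter.Eventually.of_forall fun t => (Real.exp_pos _).le)
  exact Filter.Eventually.of_forall fun t ht => lt_of_le_of_lt h ht

lemma integral_mul_expsq (x : ℝ) :
    ∫ t in Set.Ioi x, t * Real.exp (-t^2) = Real.exp (-x^2) / 2 := by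
  have hderiv : ∀ y ∈ Set.Ici x, HasDerivAt (fun t => -Real.exp (-t^2) / 2)
      (y * Real.exp (-y^2)) y := by
    intro y _
    have h1 : HasDerivAt (fun t : ℝ => -t^2) (-(2*y)) y := by
      simpa using (hasDerivAt_pow 2 y).fun_neg
    have := ((h1.exp).fun_neg.div_const 2)
    exact this.congr_deriv (by ring)
  have hint : IntegrableOn (fun t : ℝ => t * Real.exp (-t^2)) (Set.Ioi x) := by
    have : Integrable (fun t : ℝ => t * Real.exp (-t^2)) := by
      simpa using integrable_mul_exp_neg_mul_sq (one_pos)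
    exact this.integrableOn
  have htend : Tendsto (fun t : ℝ => -Real.exp (-t^2) / 2) atTop (nhds 0) := by
    have h1 : Tendsto (fun t : ℝ => -t^2) atTop atBot := by
      have : Tendsto (fun t : ℝ => t^2) atTop atTop := tendsto_pow_atTop two_ne_zero
      exact tendsto_neg_atBot_iff.mpr this
    have := (Real.tendsto_exp_atBot.comp h1).neg.div_const 2
    simpa using this
  have := MeasureTheory.integral_Ioi_of_hasDerivAt_of_tendsto' hderiv hint htend
  rw [this]
  ring

lemma gI_lt {x : ℝ} (hx : 0 < x) : gI x < Real.exp (-x^2) / (2*x) := by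
  have hint : IntegrableOn (fun t : ℝ => t * Real.exp (-t^2)) (Set.Ioi x) := by
    have : Integrable (fun t : ℝ => t * Real.exp (-t^2)) := by
      simpa using integrable_mul_exp_neg_mul_sq (one_pos)
    exact this.integrableOn
  have hD : 0 < ∫ t in Set.Ioi x, (t/x - 1) * Real.exp (-t^2) := by
    have hfi : IntegrableOn (fun t : ℝ => (t/x - 1) * Real.exp (-t^2)) (Set.Ioi x) := by
      have : (fun t : ℝ => (t/x - 1) * Real.exp (-t^2))
          = fun t => (1/x) * (t * Real.exp (-t^2)) - Real.exp (-t^2) := by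
        funext t; field_simp
      rw [this]
      exact (hint.const_mul _).sub expsq_integrable.integrableOn
    rw [MeasureTheory.setIntegral_pos_iff_support_of_nonneg_ae _ hfi]
    · have hsub : Set.Ioi x ⊆ Function.support (fun t : ℝ => (t/x - 1) * Real.exp (-t^2)) ∩ Set.Ioi x := by
        intro t ht
        refine ⟨?_, ht⟩
        have h1 : 1 < t / x := (one_lt_div hx).mpr ht
        have : 0 < (t/x - 1) * Real.exp (-t^2) := mul_pos (by linarith) (Real.exp_pos _)
        simp only [Function.mem_support]
        exact ne_of_gt this
      calc (0:ENNReal) < volume (Set.Ioi x) := by simp [Real.volume_Ioi]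
        _ ≤ _ := measure_mono hsub
    · filter_upwards [ae_restrict_mem measurableSet_Ioi] with t ht
      have h1 : 1 ≤ t / x := le_of_lt ((one_lt_div hx).mpr ht)
      exact mul_nonneg (by linarith) (Real.exp_pos _).le
  have hsplit : (∫ t in Set.Ioi x, (t/x - 1) * Real.exp (-t^2))
      = (1/x) * (Real.exp (-x^2) / 2) - gI x := by
    have : (fun t : ℝ => (t/x - 1) * Real.exp (-t^2))
        = fun t => (1/x) * (t * Real.exp (-t^2)) - Real.exp (-t^2) := by
      funext t; field_simp
    rw [this, MeasureTheory.integral_sub ((hint.const_mul _)) expsq_integrable.integrableOn,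
      MeasureTheory.integral_const_mul, integral_mul_expsq]
    rfl
  rw [hsplit] at hD
  have : (1/x) * (Real.exp (-x^2)/2) = Real.exp (-x^2) / (2*x) := by
    field_simp
  linarith [hD, this.symm]

lemma erfc_eq (x : ℝ) : erfc x = (2 / Real.sqrt π) * gI x := rfl

lemma erfc_pos (x : ℝ) : 0 < erfc x :=
  mul_pos (div_pos two_pos (Real.sqrt_pos.mpr Real.pi_pos)) (gI_pos x)

lemma sqrt_two_pi : Real.sqrt (2*π) = Real.sqrt 2 * Real.sqrt π :=
  Real.sqrt_mul (by norm_num) _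

lemma neg_div_sqrt_two_sq (κ : ℝ) : (-κ / Real.sqrt 2)^2 = κ^2 / 2 := by
  rw [div_pow, neg_pow, Real.sq_sqrt (by norm_num : (2:ℝ) ≥ 0)]
  ring_nf

lemma fgar_hasDerivAt (κ : ℝ) :
    HasDerivAt fgar (2 * Real.exp (-κ^2/2) / Real.sqrt (2*π) + κ * erfc (-κ / Real.sqrt 2)) κ := by
  have hsq2 : (0:ℝ) < Real.sqrt 2 := Real.sqrt_pos.mpr (by norm_num)
  have hsqpi : (0:ℝ) < Real.sqrt π := Real.sqrt_pos.mpr Real.pi_pos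
  -- inner function
  have hinner : HasDerivAt (fun κ : ℝ => -κ / Real.sqrt 2) (-1 / Real.sqrt 2) κ :=
    ((hasDerivAt_id κ).neg.div_const _)
  -- erfc as function of its argument
  have houter : HasDerivAt erfc ((2 / Real.sqrt π) * (-Real.exp (-(-κ / Real.sqrt 2)^2)))
      (-κ / Real.sqrt 2) := by
    have := (gI_hasDerivAt (-κ / Real.sqrt 2)).const_mul (2 / Real.sqrt π)
    exact this
  have herfc : HasDerivAt (fun κ : ℝ => erfc (-κ / Real.sqrt 2))
      ((2 / Real.sqrt π) * (-Real.exp (-(-κ / Real.sqrt 2)^2)) * (-1 / Real.sqrt 2)) κ :=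
    by have := houter.comp κ hinner; exact this
  -- exp(-κ²/2)
  have hexp : HasDerivAt (fun κ : ℝ => Real.exp (-κ^2/2)) (Real.exp (-κ^2/2) * (-κ)) κ := by
    have h1 : HasDerivAt (fun κ : ℝ => -κ^2/2) (-κ) κ := by
      have := ((hasDerivAt_pow 2 κ).neg.div_const 2)
      exact this.congr_deriv (by push_cast; ring)
    simpa [mul_comm] using h1.exp
  -- term 1
  have h1 : HasDerivAt (fun κ : ℝ => κ * Real.exp (-κ^2/2) / Real.sqrt (2*π))
      ((1 * Real.exp (-κ^2/2) + κ * (Real.exp (-κ^2/2) * (-κ))) / Real.sqrt (2*π)) κ :=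
    (((hasDerivAt_id κ).mul hexp).div_const _)
  -- term 2
  have h2 : HasDerivAt (fun κ : ℝ => (κ^2+1) * erfc (-κ / Real.sqrt 2) / 2)
      (((2*κ) * erfc (-κ / Real.sqrt 2) + (κ^2+1) *
        ((2 / Real.sqrt π) * (-Real.exp (-(-κ / Real.sqrt 2)^2)) * (-1 / Real.sqrt 2))) / 2) κ := by
    have ha : HasDerivAt (fun κ : ℝ => κ^2 + 1) (2*κ) κ := by
      have := (hasDerivAt_pow 2 κ).add_const 1
      exact this.congr_deriv (by push_cast; ring)
    exact ((ha.mul herfc).div_const 2)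
  have h := h1.add h2
  refine h.congr_deriv (Eq.symm ?_)
  rw [neg_div_sqrt_two_sq, sqrt_two_pi]
  have h2' : Real.sqrt 2 * Real.sqrt 2 = 2 := Real.mul_self_sqrt (by norm_num)
  field_simp
  ring_nf

lemma fgar_deriv_pos (κ : ℝ) :
    0 < 2 * Real.exp (-κ^2/2) / Real.sqrt (2*π) + κ * erfc (-κ / Real.sqrt 2) := by
  have hsq2 : (0:ℝ) < Real.sqrt 2 := Real.sqrt_pos.mpr (by norm_num)
  have hsqpi : (0:ℝ) < Real.sqrt π := Real.sqrt_pos.mpr Real.pi_pos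
  have h2pi : (0:ℝ) < Real.sqrt (2*π) := Real.sqrt_pos.mpr (by positivity)
  have hE : (0:ℝ) < Real.exp (-κ^2/2) := Real.exp_pos _
  rcases le_or_gt 0 κ with hκ | hκ
  · have := mul_nonneg hκ (erfc_pos (-κ / Real.sqrt 2)).le
    have hpos : 0 < 2 * Real.exp (-κ^2/2) / Real.sqrt (2*π) := by positivity
    linarith
  · set x := -κ / Real.sqrt 2 with hxdef
    have hx : 0 < x := by
      apply div_pos (by linarith) hsq2
    have hIlt := gI_lt hx
    have hxE : Real.exp (-x^2) = Real.exp (-κ^2/2) := by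
      rw [hxdef, neg_div_sqrt_two_sq]; ring_nf
    rw [hxE] at hIlt
    have hlt : κ * erfc x > κ * ((2 / Real.sqrt π) * (Real.exp (-κ^2/2) / (2*x))) := by
      rw [erfc_eq]
      have := mul_lt_mul_of_neg_left (mul_lt_mul_of_pos_left hIlt
        (by positivity : (0:ℝ) < 2 / Real.sqrt π)) hκ
      linarith [this]
    have hkey : κ * ((2 / Real.sqrt π) * (Real.exp (-κ^2/2) / (2*x)))
        = -(2 * Real.exp (-κ^2/2) / Real.sqrt (2*π)) := by
      rw [hxdef, sqrt_two_pi]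
      have h2' : Real.sqrt 2 * Real.sqrt 2 = 2 := Real.mul_self_sqrt (by norm_num)
      have hκ0 : κ ≠ 0 := ne_of_lt hκ
      field_simp
      linear_combination (-1) * h2'
    rw [hkey] at hlt
    linarith

lemma fgar_strictMono : StrictMono fgar := by
  apply strictMono_of_deriv_pos
  intro κ
  rw [(fgar_hasDerivAt κ).deriv]
  exact fgar_deriv_pos κ

lemma poly_exp_tendsto : Tendsto (fun κ : ℝ => (κ^2+1) * Real.exp (-κ^2/2)) atBot (nhds 0) := by
  have hF : Tendsto (fun u : ℝ => (2*u+1) * Real.exp (-u)) atTop (nhds 0) := by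
    have h1 := tendsto_pow_mul_exp_neg_atTop_nhds_zero 1
    have h0 := tendsto_pow_mul_exp_neg_atTop_nhds_zero 0
    have := (h1.const_mul 2).add h0
    simp only [pow_one, pow_zero, one_mul] at this
    convert this using 2 with u
    · ring
    · ring
  have hu : Tendsto (fun κ : ℝ => κ^2/2) atBot atTop := by
    have hp : Tendsto (fun t : ℝ => t^2) atTop atTop := tendsto_pow_atTop two_ne_zero
    have := (hp.comp tendsto_neg_atBot_atTop).atTop_div_const two_pos
    simpa [Function.comp] using this
  have := hF.comp hu
  convert this using 2 with κ
  simp only [Function.comp]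
  ring_nf

lemma fgar_tendsto_atBot : Tendsto fgar atBot (nhds 0) := by
  have hsq2 : (0:ℝ) < Real.sqrt 2 := Real.sqrt_pos.mpr (by norm_num)
  have hsqpi : (0:ℝ) < Real.sqrt π := Real.sqrt_pos.mpr Real.pi_pos
  have h2pi : (0:ℝ) < Real.sqrt (2*π) := Real.sqrt_pos.mpr (by positivity)
  have ht1 : Tendsto (fun κ : ℝ => κ * Real.exp (-κ^2/2) / Real.sqrt (2*π)) atBot (nhds 0) := by
    apply squeeze_zero_norm (a := fun κ => (κ^2+1) * Real.exp (-κ^2/2) / Real.sqrt (2*π)) ?_ ?_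
    · intro κ
      rw [Real.norm_eq_abs, abs_div, abs_of_pos h2pi, abs_mul,
        abs_of_pos (Real.exp_pos _)]
      apply div_le_div_of_nonneg_right ?_ h2pi.le
      apply mul_le_mul_of_nonneg_right ?_ (Real.exp_pos _).le
      nlinarith [abs_nonneg κ, sq_abs κ, sq_nonneg (|κ| - 1)]
    · simpa using poly_exp_tendsto.div_const (Real.sqrt (2*π))
  have ht2 : Tendsto (fun κ : ℝ => (κ^2+1) * erfc (-κ / Real.sqrt 2) / 2) atBot (nhds 0) := by
    have hbound : Tendsto (fun κ : ℝ => (κ^2+1) * Real.exp (-κ^2/2) * (Real.sqrt 2 / Real.sqrt π) / 2)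
        atBot (nhds 0) := by
      simpa using (poly_exp_tendsto.mul_const (Real.sqrt 2 / Real.sqrt π)).div_const 2
    refine tendsto_of_tendsto_of_tendsto_of_le_of_le'
      (tendsto_const_nhds (x := (0:ℝ))) hbound ?_ ?_
    · filter_upwards with κ
      exact div_nonneg (mul_nonneg (by positivity) (erfc_pos _).le) two_pos.le
    · filter_upwards [Filter.eventually_le_atBot (-1:ℝ)] with κ hκ
      set x := -κ / Real.sqrt 2 with hxdef
      have hx : 0 < x := div_pos (by linarith) hsq2
      have hIlt := (gI_lt hx).le
      have hxE : Real.exp (-x^2) = Real.exp (-κ^2/2) := by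
        rw [hxdef, neg_div_sqrt_two_sq]; ring_nf
      rw [hxE] at hIlt
      have herfb : erfc x ≤ Real.exp (-κ^2/2) * (Real.sqrt 2 / Real.sqrt π) := by
        rw [erfc_eq]
        have h1 : (2 / Real.sqrt π) * gI x ≤ (2 / Real.sqrt π) * (Real.exp (-κ^2/2) / (2*x)) :=
          mul_le_mul_of_nonneg_left hIlt (by positivity)
        refine h1.trans ?_
        have hxge : 1 / Real.sqrt 2 ≤ x := by
          rw [hxdef, div_le_div_iff₀ hsq2 hsq2]
          nlinarith [Real.mul_self_sqrt (by norm_num : (0:ℝ) ≤ 2)]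
        have hinv : 1 / x ≤ Real.sqrt 2 := by
          rw [div_le_iff₀ hx]
          calc (1:ℝ) = Real.sqrt 2 * (1 / Real.sqrt 2) := by field_simp
            _ ≤ Real.sqrt 2 * x := by
                exact mul_le_mul_of_nonneg_left hxge hsq2.le
        have : (2 / Real.sqrt π) * (Real.exp (-κ^2/2) / (2*x))
            = Real.exp (-κ^2/2) * (1/x) / Real.sqrt π := by
          field_simp
        rw [this]
        rw [div_le_iff₀ hsqpi] at *
        calc Real.exp (-κ^2/2) * (1/x) ≤ Real.exp (-κ^2/2) * Real.sqrt 2 :=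
              mul_le_mul_of_nonneg_left hinv (Real.exp_pos _).le
          _ = Real.exp (-κ^2/2) * (Real.sqrt 2 / Real.sqrt π) * Real.sqrt π := by
              field_simp
      have hp : (0:ℝ) < κ^2 + 1 := by positivity
      have := mul_le_mul_of_nonneg_left herfb hp.le
      calc (κ^2+1) * erfc x / 2 ≤ (κ^2+1) * (Real.exp (-κ^2/2) * (Real.sqrt 2 / Real.sqrt π)) / 2 := by
            linarith
        _ = (κ^2+1) * Real.exp (-κ^2/2) * (Real.sqrt 2 / Real.sqrt π) / 2 := by ring
  have hsum := ht1.add ht2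
  simp only [add_zero] at hsum
  exact hsum.congr (fun κ => rfl)

lemma fgar_tendsto_atTop : Tendsto fgar atTop atTop := by
  have hsq2 : (0:ℝ) < Real.sqrt 2 := Real.sqrt_pos.mpr (by norm_num)
  have hsqpi : (0:ℝ) < Real.sqrt π := Real.sqrt_pos.mpr Real.pi_pos
  have h2pi : (0:ℝ) < Real.sqrt (2*π) := Real.sqrt_pos.mpr (by positivity)
  have hC : Tendsto (fun κ : ℝ => (κ^2+1)/2) atTop atTop := by
    have hp : Tendsto (fun κ : ℝ => κ^2) atTop atTop := tendsto_pow_atTop two_ne_zero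
    exact (tendsto_atTop_add_const_right atTop 1 hp).atTop_div_const two_pos
  apply tendsto_atTop_mono' atTop ?_ hC
  · filter_upwards [Filter.eventually_ge_atTop (0:ℝ)] with κ hκ
    have herf1 : 1 ≤ erfc (-κ / Real.sqrt 2) := by
      have hle : -κ / Real.sqrt 2 ≤ 0 := by
        apply div_nonpos_of_nonpos_of_nonneg (by linarith) hsq2.le
      have := gI_anti hle
      rw [gI_zero] at this
      rw [erfc_eq]
      calc (1:ℝ) = (2 / Real.sqrt π) * (Real.sqrt π / 2) := by field_simp
        _ ≤ (2 / Real.sqrt π) * gI (-κ / Real.sqrt 2) :=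
            mul_le_mul_of_nonneg_left this (by positivity)
    have ht1 : 0 ≤ κ * Real.exp (-κ^2/2) / Real.sqrt (2*π) := by positivity
    have hp : (0:ℝ) < κ^2 + 1 := by positivity
    have : (κ^2+1) * 1 / 2 ≤ (κ^2+1) * erfc (-κ / Real.sqrt 2) / 2 := by
      apply div_le_div_of_nonneg_right ?_ two_pos.le
      exact mul_le_mul_of_nonneg_left herf1 hp.le
    unfold fgar
    linarith [this]

lemma fgar_pos (κ : ℝ) : 0 < fgar κ := by
  have h1 : fgar (κ - 1) < fgar κ := fgar_strictMono (by linarith)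
  have h0 : 0 ≤ fgar (κ - 1) := by
    apply le_of_tendsto fgar_tendsto_atBot
    filter_upwards [Filter.eventually_le_atBot (κ-1)] with y hy
    exact (fgar_strictMono.monotone hy)
  linarith

theorem fgar_strictMono_pos_limits :
    StrictMono fgar ∧ (∀ κ : ℝ, 0 < fgar κ) ∧
    Tendsto fgar atBot (nhds 0) ∧ Tendsto fgar atTop atTop :=
  ⟨fgar_strictMono, fgar_pos, fgar_tendsto_atBot, fgar_tendsto_atTop⟩
end

section
/- If g is a standard normal random variable, then E[((g+κ)₊)²] = f_gar(κ) = κ e^{-κ²/2}/√(2π) + (κ²+1)·erfc(-κ/√2)/2, where (t)₊ = max(t,0). -/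
open Real MeasureTheory ProbabilityTheory Filter Set
open scoped ENNReal NNReal

lemma sq_mul_exp_le (x : ℝ) : x ^ 2 * Real.exp (-x^2/2) ≤ 4 * Real.exp (-(1/4) * x^2) := by
  have h : x ^ 2 * Real.exp (-x^2/2) = (x^2 * Real.exp (-(1/4)*x^2)) * Real.exp (-(1/4)*x^2) := by
    rw [mul_assoc, ← Real.exp_add]; ring_nf
  rw [h]
  have hb : x^2 * Real.exp (-(1/4)*x^2) ≤ 4 := by
    have hmul : Real.exp (-(1/4)*x^2) * Real.exp ((1/4)*x^2) = 1 := by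
      rw [← Real.exp_add]; norm_num
    have h1 := Real.add_one_le_exp ((1/4) * x^2)
    have h3 : Real.exp (-(1/4)*x^2) * ((1/4)*x^2 + 1) ≤ 1 := by
      calc Real.exp (-(1/4)*x^2) * ((1/4)*x^2 + 1)
          ≤ Real.exp (-(1/4)*x^2) * Real.exp ((1/4)*x^2) :=
            mul_le_mul_of_nonneg_left h1 (Real.exp_pos _).le
        _ = 1 := hmul
    nlinarith [Real.exp_pos (-(1/4) * x^2), sq_nonneg x]
  exact mul_le_mul_of_nonneg_right hb (Real.exp_pos _).le

lemma int_sq : Integrable (fun x : ℝ => x ^ 2 * Real.exp (-x^2/2)) := by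
  apply Integrable.mono' ((integrable_exp_neg_mul_sq (by norm_num : (0:ℝ) < 1/4)).const_mul 4)
  · exact ((measurable_id.pow_const 2).mul
      (((measurable_id.pow_const 2).neg.div_const 2).exp)).aestronglyMeasurable
  · refine Filter.Eventually.of_forall fun x => ?_
    rw [Real.norm_eq_abs, abs_of_nonneg (by positivity)]
    exact sq_mul_exp_le x

lemma int_lin : Integrable (fun x : ℝ => x * Real.exp (-x^2/2)) := by
  have := integrable_mul_exp_neg_mul_sq (by norm_num : (0:ℝ) < 1/2)
  refine this.congr (Filter.Eventually.of_forall fun x => ?_)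
  ring_nf

lemma int_exp : Integrable (fun x : ℝ => Real.exp (-x^2/2)) := by
  have := integrable_exp_neg_mul_sq (by norm_num : (0:ℝ) < 1/2)
  refine this.congr (Filter.Eventually.of_forall fun x => ?_)
  ring_nf

lemma tendsto_exp_sq : Tendsto (fun x : ℝ => Real.exp (-x^2/2)) atTop (nhds 0) := by
  apply Real.tendsto_exp_atBot.comp
  have : Tendsto (fun x : ℝ => x^2/2) atTop atTop :=
    (tendsto_pow_atTop (two_ne_zero)).atTop_div_const two_pos
  simpa [neg_div] using tendsto_neg_atBot_iff.mpr this

lemma tendsto_lin_exp : Tendsto (fun x : ℝ => x * Real.exp (-x^2/2)) atTop (nhds 0) := by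
  have h0 : Tendsto (fun x : ℝ => x * Real.exp (-x)) atTop (nhds 0) := by
    simpa using Real.tendsto_pow_mul_exp_neg_atTop_nhds_zero 1
  apply tendsto_of_tendsto_of_tendsto_of_le_of_le' tendsto_const_nhds h0
  · filter_upwards [eventually_ge_atTop (0:ℝ)] with x hx
    positivity
  · filter_upwards [eventually_ge_atTop (2:ℝ)] with x hx
    have hx0 : (0:ℝ) ≤ x := by linarith
    have : Real.exp (-x^2/2) ≤ Real.exp (-x) := by
      apply Real.exp_le_exp.mpr; nlinarith
    exact mul_le_mul_of_nonneg_left this hx0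

/-- key FTC computation -/
lemma integral_poly_exp (κ : ℝ) :
    ∫ x in Set.Ioi (-κ), (x^2 + 2*κ*x - 1) * Real.exp (-x^2/2)
      = κ * Real.exp (-κ^2/2) := by
  have hderiv : ∀ x ∈ Set.Ici (-κ), HasDerivAt (fun x : ℝ => -(x + 2*κ) * Real.exp (-x^2/2))
      ((x^2 + 2*κ*x - 1) * Real.exp (-x^2/2)) x := by
    intro x _
    have h1 : HasDerivAt (fun x : ℝ => -(x + 2*κ)) (-1) x := by
      exact ((hasDerivAt_id x).add_const (2*κ)).neg
    have h2 : HasDerivAt (fun x : ℝ => Real.exp (-x^2/2)) (-x * Real.exp (-x^2/2)) x := by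
      have hp : HasDerivAt (fun x : ℝ => -x^2/2) (-x) x := by
        have := (hasDerivAt_pow 2 x).neg.div_const 2
        exact this.congr_deriv (by ring)
      simpa [mul_comm] using hp.exp
    have := h1.mul h2
    exact this.congr_deriv (by ring)
  have hint : IntegrableOn (fun x : ℝ => (x^2 + 2*κ*x - 1) * Real.exp (-x^2/2)) (Set.Ioi (-κ)) := by
    apply Integrable.integrableOn
    have := (int_sq.add (int_lin.const_mul (2*κ))).sub int_exp
    refine this.congr (Filter.Eventually.of_forall fun x => ?_)
    simp only [Pi.add_apply, Pi.sub_apply]; ring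
  have htend : Tendsto (fun x : ℝ => -(x + 2*κ) * Real.exp (-x^2/2)) atTop (nhds 0) := by
    have : Tendsto (fun x : ℝ => -(x * Real.exp (-x^2/2) + (2*κ) * Real.exp (-x^2/2)))
        atTop (nhds (-(0 + (2*κ) * 0))) :=
      (tendsto_lin_exp.add (tendsto_exp_sq.const_mul (2*κ))).neg
    simpa using this.congr (fun x => by ring)
  have := integral_Ioi_of_hasDerivAt_of_tendsto' hderiv hint htend
  rw [this]
  have : (-κ)^2 = κ^2 := by ring
  rw [this]
  ring

theorem second_moment_pos_part (κ : ℝ) :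
    ∫ g, max (g + κ) 0 ^ 2 ∂(gaussianReal 0 1)
      = κ * Real.exp (-κ^2 / 2) / Real.sqrt (2 * π)
        + (κ^2 + 1) * erfc (-κ / Real.sqrt 2) / 2 := by
  have sqrt2_pos : (0:ℝ) < Real.sqrt 2 := Real.sqrt_pos.mpr two_pos
  have sqrtpi_pos : (0:ℝ) < Real.sqrt π := Real.sqrt_pos.mpr Real.pi_pos
  have sqrt2pi : Real.sqrt (2 * π) = Real.sqrt 2 * Real.sqrt π :=
    Real.sqrt_mul (by norm_num) π
  -- step 1: reduce to Lebesgue integral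
  have h0 : gaussianReal 0 1 = volume.withDensity (gaussianPDF 0 1) :=
    gaussianReal_of_var_ne_zero 0 one_ne_zero
  rw [h0, show gaussianPDF 0 1
      = fun x => ((Real.toNNReal (gaussianPDFReal 0 1 x) : ℝ≥0) : ℝ≥0∞) from rfl,
    integral_withDensity_eq_integral_smul
      ((measurable_gaussianPDFReal 0 1).real_toNNReal) _]
  have hpdf : ∀ x : ℝ, (Real.toNNReal (gaussianPDFReal 0 1 x) : ℝ≥0) • (max (x + κ) 0 ^ 2)
      = (Real.sqrt (2*π))⁻¹ * Real.exp (-x^2/2) * max (x + κ) 0 ^ 2 := by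
    intro x
    rw [NNReal.smul_def, smul_eq_mul, Real.coe_toNNReal _ (gaussianPDFReal_nonneg 0 1 x)]
    simp [gaussianPDFReal]
  simp_rw [hpdf]
  -- step 2: restrict to Ioi (-κ)
  rw [← setIntegral_eq_integral_of_forall_compl_eq_zero
    (s := Set.Ioi (-κ)) (fun x hx => by
      have : x + κ ≤ 0 := by simp only [Set.mem_Ioi, not_lt] at hx; linarith
      rw [max_eq_right this]; ring)]
  have hcongr : ∫ x in Set.Ioi (-κ), (Real.sqrt (2*π))⁻¹ * Real.exp (-x^2/2) * max (x + κ) 0 ^ 2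
      = ∫ x in Set.Ioi (-κ), (Real.sqrt (2*π))⁻¹ *
          ((x^2 + 2*κ*x - 1) * Real.exp (-x^2/2) + (κ^2+1) * Real.exp (-x^2/2)) := by
    apply setIntegral_congr_fun measurableSet_Ioi
    intro x hx
    have : (0:ℝ) ≤ x + κ := by simp only [Set.mem_Ioi] at hx; linarith
    simp only [max_eq_left this]
    ring
  rw [hcongr]
  -- step 3: split and evaluate
  have hint1 : IntegrableOn (fun x : ℝ => (x^2 + 2*κ*x - 1) * Real.exp (-x^2/2))
      (Set.Ioi (-κ)) := by
    apply Integrable.integrableOn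
    have := (int_sq.add (int_lin.const_mul (2*κ))).sub int_exp
    refine this.congr (Filter.Eventually.of_forall fun x => ?_)
    simp only [Pi.add_apply, Pi.sub_apply]; ring
  have hint2 : IntegrableOn (fun x : ℝ => (κ^2+1) * Real.exp (-x^2/2)) (Set.Ioi (-κ)) :=
    (int_exp.const_mul (κ^2+1)).integrableOn
  rw [integral_const_mul, integral_add hint1 hint2, integral_poly_exp κ, integral_const_mul]
  -- step 4: substitution for the gaussian tail
  have hsub : ∫ x in Set.Ioi (-κ), Real.exp (-x^2/2)
      = Real.sqrt 2 * ∫ t in Set.Ioi (-κ / Real.sqrt 2), Real.exp (-t^2) := by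
    have hb : (0:ℝ) < (Real.sqrt 2)⁻¹ := by positivity
    have := integral_comp_mul_left_Ioi (fun t : ℝ => Real.exp (-t^2)) (-κ) hb
    simp only [smul_eq_mul] at this
    have hl : ∀ x : ℝ, Real.exp (-((Real.sqrt 2)⁻¹ * x)^2) = Real.exp (-x^2/2) := by
      intro x
      congr 1
      rw [mul_pow, ← Real.sqrt_inv, Real.sq_sqrt (by norm_num : (0:ℝ) ≤ 2⁻¹)]
      ring
    simp_rw [hl] at this
    rw [this, inv_inv, show (Real.sqrt 2)⁻¹ * (-κ) = -κ / Real.sqrt 2 by ring]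
  rw [hsub, erfc]
  -- final algebra
  have hne : Real.sqrt (2*π) ≠ 0 := by rw [sqrt2pi]; positivity
  rw [sqrt2pi]
  field_simp
end
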